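/- Let I be a finite connected simply-connected poset and let I₀ ∈ I be a minimal element. Then for each connected component K of I \ {I₀}, the subposet K ∩ {J : J ≥ I₀} is connected. -/

import Mathlib

open CategoryTheory

universe v u

/-- A subset of a poset is connected: nonempty, and any two of its elements are
joined by a zigzag of comparabilities within the subset. -/
def ConnIn {α : Type*} [PartialOrder α] (s : Set α) : Prop :=
  s.Nonempty ∧ ∀ x ∈ s, ∀ y ∈ s,
    Relation.ReflTransGen (fun a b => a ∈ s ∧ b ∈ s ∧ (a ≤ b ∨ b ≤ a)) x y

/-- `K` is a connected component of the subset `s` of a poset. -/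
def IsComp {α : Type*} [PartialOrder α] (s K : Set α) : Prop :=
  ∃ x ∈ s, K = {y | y ∈ s ∧
    Relation.ReflTransGen (fun a b => a ∈ s ∧ b ∈ s ∧ (a ≤ b ∨ b ≤ a)) x y}

/-- A category is simply-connected if its fundamental groupoid — the groupoid
freely generated by it, i.e. its localization at all morphisms — has at most
one morphism between any two objects. -/
def SimplyConnectedCat (I : Type u) [Category.{v} I] : Prop :=
  ∀ (X Y : (⊤ : MorphismProperty I).Localization) (f g : X ⟶ Y), f = g

section Aux

variable {α : Type} [PartialOrder α]

open Classical in
/-- The monodromy cocycle: `1` on edges out of `I₀` into `c`, `0` elsewhere. -/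
noncomputable def phiFn (c : Set α) (I₀ : α) (a b : α) : Multiplicative ℤ :=
  Multiplicative.ofAdd (if a = I₀ ∧ b ∈ c then (1 : ℤ) else 0)

/-- Two functors to a single-object category that are equal have equal maps,
with no `eqToHom` corrections needed. -/
theorem singleObj_congr_map {M : Type*} [Monoid M] {C : Type*} [Category C]
    {F G : C ⥤ SingleObj M} (h : F = G) {X Y : C} (f : X ⟶ Y) :
    F.map f = G.map f := by subst h; rfl

/-- View a morphism in a single-object category as a monoid element. -/
def soMul {M : Type*} [Monoid M] {X Y : SingleObj M} (f : X ⟶ Y) : M := f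

theorem soMul_comp {M : Type*} [Monoid M] {X Y Z : SingleObj M} (f : X ⟶ Y) (g : Y ⟶ Z) :
    soMul (f ≫ g) = soMul g * soMul f := rfl

theorem soMul_id {M : Type*} [Monoid M] (X : SingleObj M) : soMul (𝟙 X) = 1 := rfl

theorem soMul_inv {G : Type*} [Group G] {X Y : SingleObj G} (f : X ⟶ Y) :
    soMul (CategoryTheory.inv f) = (soMul f)⁻¹ := by
  rw [SingleObj.inv_as_inv]; rfl

open Classical in
/-- The monodromy functor associated to a suitable subset `c`. -/
noncomputable def Fc (c : Set α) (I₀ : α) (hmin : ∀ x : α, ¬ x < I₀) (hI : I₀ ∉ c)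
    (hc : ∀ b d : α, I₀ ≤ b → b ≤ d → b ≠ I₀ → (b ∈ c ↔ d ∈ c)) :
    α ⥤ SingleObj (Multiplicative ℤ) where
  obj _ := SingleObj.star _
  map {a b} _ := phiFn c I₀ a b
  map_id a := by
    rw [SingleObj.id_as_one]
    simp only [phiFn]
    have : ¬ (a = I₀ ∧ a ∈ c) := by
      rintro ⟨rfl, h⟩; exact hI h
    rw [if_neg this]; rfl
  map_comp {a b d} f g := by
    have hab : a ≤ b := leOfHom f
    have hbd : b ≤ d := leOfHom g
    rw [SingleObj.comp_as_mul]
    simp only [phiFn]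
    rw [← ofAdd_add]
    congr 1
    have key1 : ¬((b = I₀ ∧ d ∈ c) ∧ (a = I₀ ∧ b ∈ c)) := by
      rintro ⟨⟨hb, _⟩, ⟨_, hbc⟩⟩; exact hI (hb ▸ hbc)
    have key2 : (a = I₀ ∧ d ∈ c) ↔ (b = I₀ ∧ d ∈ c) ∨ (a = I₀ ∧ b ∈ c) := by
      constructor
      · rintro ⟨ha, hdc⟩
        by_cases hb : b = I₀
        · exact Or.inl ⟨hb, hdc⟩
        · exact Or.inr ⟨ha, (hc b d (ha ▸ hab) hbd hb).2 hdc⟩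
      · rintro (⟨hb, hdc⟩ | ⟨ha, hbc⟩)
        · have ha : a = I₀ := by
            by_contra h; exact hmin a (lt_of_le_of_ne (hb ▸ hab) h)
          exact ⟨ha, hdc⟩
        · have hbne : b ≠ I₀ := fun h => hI (h ▸ hbc)
          exact ⟨ha, (hc b d (ha ▸ hab) hbd hbne).1 hbc⟩
    have hsum : (if (b = I₀ ∧ d ∈ c) then (1:ℤ) else 0) + (if (a = I₀ ∧ b ∈ c) then (1:ℤ) else 0)
        = if ((b = I₀ ∧ d ∈ c) ∨ (a = I₀ ∧ b ∈ c)) then (1:ℤ) else 0 := by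
      by_cases h2 : (b = I₀ ∧ d ∈ c)
      · rw [if_pos h2, if_neg (fun h3 => key1 ⟨h2, h3⟩), if_pos (Or.inl h2)]
        norm_num
      · by_cases h3 : (a = I₀ ∧ b ∈ c)
        · rw [if_neg h2, if_pos h3, if_pos (Or.inr h3)]
          norm_num
        · rw [if_neg h2, if_neg h3, if_neg (by tauto)]
          norm_num
    rw [hsum, if_congr key2 rfl rfl]

end Aux

/-- If `I` is a finite connected simply-connected poset and `I₀ ∈ I` is
minimal, then for each connected component `K` of `I \ {I₀}`, the subposet
`K ∩ {J | J ≥ I₀}` is connected. -/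
theorem stmt_18 {α : Type} [Fintype α] [PartialOrder α]
    (hconn : ConnIn (Set.univ : Set α))
    (hsc : SimplyConnectedCat α)
    (I₀ : α) (hmin : ∀ x : α, ¬ x < I₀)
    (K : Set α) (hK : IsComp (Set.univ \ {I₀}) K) :
    ConnIn (K ∩ {J | I₀ ≤ J}) := by
  classical
  set s : Set α := Set.univ \ {I₀} with hs
  set R : α → α → Prop := fun a b => a ∈ s ∧ b ∈ s ∧ (a ≤ b ∨ b ≤ a) with hR
  obtain ⟨x₀, hx₀s, hKdef⟩ := hK
  have hRsymm : ∀ {a b}, R a b → R b a := fun h => ⟨h.2.1, h.1, h.2.2.symm⟩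
  have hKs : K ⊆ s := by rw [hKdef]; exact fun y hy => hy.1
  have hKstep : ∀ {a b}, a ∈ K → R a b → b ∈ K := by
    intro a b ha hab
    rw [hKdef] at ha ⊢
    exact ⟨hab.2.1, ha.2.tail hab⟩
  have hKconn : ∀ {a b}, a ∈ K → b ∈ K → Relation.ReflTransGen R a b := by
    intro a b ha hb
    rw [hKdef] at ha hb
    have hsym : Symmetric (Relation.ReflTransGen R) :=
      fun _ _ h => by
        induction h with
        | refl => exact Relation.ReflTransGen.refl
        | tail _ hst ih => exact ih.head (hRsymm hst)
    exact Relation.ReflTransGen.trans (hsym ha.2) hb.2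
  have hI₀K : I₀ ∉ K := fun h => (hKs h).2 rfl
  -- Nonemptiness of `K ∩ {J | I₀ ≤ J}`
  have hne : ∃ z, z ∈ K ∧ I₀ ≤ z := by
    have aux : ∀ a : α,
        Relation.ReflTransGen
          (fun a b : α => a ∈ (Set.univ : Set α) ∧ b ∈ (Set.univ : Set α) ∧ (a ≤ b ∨ b ≤ a))
          a I₀ → a ∈ K → ∃ z, z ∈ K ∧ I₀ ≤ z := by
      intro a h
      induction h using Relation.ReflTransGen.head_induction_on with
      | refl => intro h; exact absurd h hI₀K
      | head hab htail ih =>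
        rename_i a' b'
        intro haK
        have ha' : a' ≠ I₀ := fun h => hI₀K (h ▸ haK)
        by_cases hb' : b' = I₀
        · rcases (hb' ▸ hab.2.2 : a' ≤ I₀ ∨ I₀ ≤ a') with h | h
          · exact absurd (lt_of_le_of_ne h ha') (hmin a')
          · exact ⟨a', haK, h⟩
        · refine ih (hKstep haK ⟨⟨trivial, ha'⟩, ⟨trivial, hb'⟩, hab.2.2⟩)
    have hx₀K : x₀ ∈ K := by rw [hKdef]; exact ⟨hx₀s, Relation.ReflTransGen.refl⟩
    exact aux x₀ (hconn.2 x₀ trivial I₀ trivial) hx₀K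
  obtain ⟨z₀, hz₀K, hz₀ge⟩ := hne
  set T : Set α := K ∩ {J | I₀ ≤ J} with hT
  set RT : α → α → Prop := fun a b => a ∈ T ∧ b ∈ T ∧ (a ≤ b ∨ b ≤ a) with hRT
  refine ⟨⟨z₀, hz₀K, hz₀ge⟩, ?_⟩
  intro x hx y hy
  -- the component of `x` in `T`
  set c : Set α := {z | z ∈ T ∧ Relation.ReflTransGen RT x z} with hcdef
  have hxc : x ∈ c := ⟨hx, Relation.ReflTransGen.refl⟩
  have hIc : I₀ ∉ c := fun h => hI₀K h.1.1
  have hcc : ∀ b d : α, I₀ ≤ b → b ≤ d → b ≠ I₀ → (b ∈ c ↔ d ∈ c) := by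
    intro b d hIb hbd hb
    have hd : d ≠ I₀ := fun h => hb (le_antisymm (h ▸ hbd) hIb)
    by_cases hbK : b ∈ K
    · have hdK : d ∈ K := hKstep hbK ⟨⟨trivial, hb⟩, ⟨trivial, hd⟩, Or.inl hbd⟩
      have hbT : b ∈ T := ⟨hbK, hIb⟩
      have hdT : d ∈ T := ⟨hdK, hIb.trans hbd⟩
      constructor
      · rintro ⟨_, hp⟩; exact ⟨hdT, hp.tail ⟨hbT, hdT, Or.inl hbd⟩⟩
      · rintro ⟨_, hp⟩; exact ⟨hbT, hp.tail ⟨hdT, hbT, Or.inr hbd⟩⟩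
    · have hdK : d ∉ K := fun h =>
        hbK (hKstep h ⟨⟨trivial, hd⟩, ⟨trivial, hb⟩, Or.inr hbd⟩)
      constructor
      · rintro ⟨hbT, _⟩; exact absurd hbT.1 hbK
      · rintro ⟨hdT, _⟩; exact absurd hdT.1 hdK
  -- the monodromy functor and its lift to the localization
  set W : MorphismProperty α := ⊤ with hW
  set F : α ⥤ SingleObj (Multiplicative ℤ) := Fc c I₀ hmin hIc hcc with hF
  have hinv : W.IsInvertedBy F := fun _ _ f _ => inferInstance
  set F' : W.Localization ⥤ SingleObj (Multiplicative ℤ) :=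
    Localization.Construction.lift F hinv with hF'
  have hfac : ∀ {a b : α} (f : a ⟶ b), F'.map (W.Q.map f) = F.map f := by
    intro a b f
    exact singleObj_congr_map (Localization.Construction.fac F hinv) f
  have hQiso : ∀ {a b : α} (f : a ⟶ b), IsIso (W.Q.map f) := fun f =>
    W.Q_inverts _ trivial
  have hFeval : ∀ {a b : α} (h : a ≤ b), F.map (homOfLE h) = phiFn c I₀ a b := fun _ => rfl
  -- a morphism built from a zigzag within `s` has trivial monodromy
  have m2ex : ∀ {a b : α}, Relation.ReflTransGen R a b →
      ∃ m : W.Q.obj a ⟶ W.Q.obj b, soMul (F'.map m) = 1 := by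
    intro a b hab
    induction hab with
    | refl => exact ⟨𝟙 _, by rw [F'.map_id, soMul_id]⟩
    | tail _ hstep ih =>
      rename_i b' d' _
      obtain ⟨m, hm⟩ := ih
      have hb' : b' ≠ I₀ := hstep.1.2
      have hd' : d' ≠ I₀ := hstep.2.1.2
      rcases hstep.2.2 with hle | hge
      · refine ⟨m ≫ W.Q.map (homOfLE hle), ?_⟩
        rw [F'.map_comp, soMul_comp, hm, mul_one, hfac, hFeval]
        show phiFn c I₀ b' d' = 1
        simp only [phiFn]
        rw [if_neg fun h => hb' h.1]
        rfl
      · haveI := hQiso (homOfLE hge)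
        refine ⟨m ≫ inv (W.Q.map (homOfLE hge)), ?_⟩
        rw [F'.map_comp, soMul_comp, hm, mul_one, F'.map_inv, soMul_inv, hfac, hFeval]
        show (phiFn c I₀ d' b')⁻¹ = 1
        simp only [phiFn]
        rw [if_neg fun h => hd' h.1]
        simp
  obtain ⟨m2, hm2⟩ := m2ex (hKconn hx.1 hy.1)
  -- the morphism through `I₀`
  haveI := hQiso (homOfLE hx.2)
  have heqm := hsc _ _ (inv (W.Q.map (homOfLE hx.2)) ≫ W.Q.map (homOfLE hy.2)) m2
  have himg : soMul (F'.map (inv (W.Q.map (homOfLE hx.2)) ≫ W.Q.map (homOfLE hy.2))) = 1 := by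
    rw [heqm]; exact hm2
  rw [F'.map_comp, soMul_comp, F'.map_inv, soMul_inv, hfac, hfac,
    hFeval, hFeval, mul_inv_eq_one] at himg
  have himg2 : phiFn c I₀ I₀ y = phiFn c I₀ I₀ x := himg
  have hyc : y ∈ c := by
    by_contra hyc
    have hvx : phiFn c I₀ I₀ x = Multiplicative.ofAdd (1 : ℤ) := by
      simp [phiFn, hxc]
    have hvy : phiFn c I₀ I₀ y = Multiplicative.ofAdd (0 : ℤ) := by
      simp [phiFn, hyc]
    rw [hvx, hvy] at himg2
    have := Multiplicative.ofAdd.injective himg2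
    omega
  exact hyc.2
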